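/- For g(x) = e^{x-1} and every v ∈ [0,1], α(v) := 1 - g(v) + ∫₀ᵛ min{g(y), (g(v)-g(y))/(1-g(y))} dy satisfies α(v) ≥ 1/2. -/

import Mathlib

set_option maxHeartbeats 1000000

open Real



lemma log_lb (z : ℝ) (hz : 0 ≤ z) :
    (60*z+60*z^2+11*z^3)/(60+90*z+36*z^2+3*z^3) ≤ Real.log (1+z) := by
  have hD : ∀ x : ℝ, 0 ≤ x → (0:ℝ) < 60+90*x+36*x^2+3*x^3 := by intro x hx; positivity
  set f : ℝ → ℝ := fun x => Real.log (1+x) - (60*x+60*x^2+11*x^3)/(60+90*x+36*x^2+3*x^3) with hf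
  have hder : ∀ x : ℝ, 0 ≤ x →
      HasDerivAt f (9*x^6/((1+x)*(60+90*x+36*x^2+3*x^3)^2)) x := by
    intro x hx
    have h1x : (0:ℝ) < 1 + x := by linarith
    have hl : HasDerivAt (fun y : ℝ => Real.log (1+y)) (1/(1+x)) x := by
      have := ((hasDerivAt_id x).const_add (1:ℝ)).log (ne_of_gt h1x)
      simpa using this
    have hN : HasDerivAt (fun y : ℝ => 60*y+60*y^2+11*y^3) (60+120*x+33*x^2) x := by
      have h1 := (hasDerivAt_id x).const_mul (60:ℝ)
      have h2 := (hasDerivAt_pow 2 x).const_mul (60:ℝ)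
      have h3 := (hasDerivAt_pow 3 x).const_mul (11:ℝ)
      exact ((h1.add h2).add h3).congr_deriv (by push_cast; ring)
    have hDd : HasDerivAt (fun y : ℝ => 60+90*y+36*y^2+3*y^3) (90+72*x+9*x^2) x := by
      have h1 := ((hasDerivAt_id x).const_mul (90:ℝ)).const_add (60:ℝ)
      have h2 := (hasDerivAt_pow 2 x).const_mul (36:ℝ)
      have h3 := (hasDerivAt_pow 3 x).const_mul (3:ℝ)
      exact ((h1.add h2).add h3).congr_deriv (by push_cast; ring)
    have hq := hN.div hDd (ne_of_gt (hD x hx))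
    have := hl.sub hq
    refine this.congr_deriv ?_
    rw [div_sub_div _ _ (ne_of_gt h1x) (pow_pos (hD x hx) 2).ne']
    rw [div_eq_div_iff (by positivity) (by positivity)]
    ring
  have hmono : MonotoneOn f (Set.Ici (0:ℝ)) := by
    apply monotoneOn_of_deriv_nonneg (convex_Ici 0)
    · intro x hx
      exact (hder x hx).continuousAt.continuousWithinAt
    · intro x hx
      rw [interior_Ici] at hx
      exact (hder x (le_of_lt (Set.mem_Ioi.mp hx))).differentiableAt.differentiableWithinAt
    · intro x hx
      rw [interior_Ici] at hx
      have hx' : (0:ℝ) < x := hx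
      rw [(hder x (le_of_lt hx')).deriv]
      have h1 : (0:ℝ) < 1 + x := by linarith
      have h2 := pow_nonneg (le_of_lt hx') 6
      have h3 := pow_nonneg (le_of_lt hx') 7
      apply div_nonneg (by linarith) (by positivity)
  have h0 : f 0 = 0 := by simp [hf]
  have := hmono (Set.mem_Ici.mpr le_rfl) (Set.mem_Ici.mpr hz) hz
  rw [h0, hf] at this
  simpa [sub_nonneg] using this

lemma log_ub (z : ℝ) (hz : 0 ≤ z) :
    Real.log (1+z) ≤ (420*z+510*z^2+140*z^3+3*z^4)/(420+720*z+360*z^2+48*z^3) := by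
  have hD : ∀ x : ℝ, 0 ≤ x → (0:ℝ) < 420+720*x+360*x^2+48*x^3 := by intro x hx; positivity
  set f : ℝ → ℝ := fun x => (420*x+510*x^2+140*x^3+3*x^4)/(420+720*x+360*x^2+48*x^3) - Real.log (1+x) with hf
  have hder : ∀ x : ℝ, 0 ≤ x →
      HasDerivAt f (144*x^7/((1+x)*(420+720*x+360*x^2+48*x^3)^2)) x := by
    intro x hx
    have h1x : (0:ℝ) < 1 + x := by linarith
    have hl : HasDerivAt (fun y : ℝ => Real.log (1+y)) (1/(1+x)) x := by
      have := ((hasDerivAt_id x).const_add (1:ℝ)).log (ne_of_gt h1x)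
      simpa using this
    have hN : HasDerivAt (fun y : ℝ => 420*y+510*y^2+140*y^3+3*y^4) (420+1020*x+420*x^2+12*x^3) x := by
      have h1 := (hasDerivAt_id x).const_mul (420:ℝ)
      have h2 := (hasDerivAt_pow 2 x).const_mul (510:ℝ)
      have h3 := (hasDerivAt_pow 3 x).const_mul (140:ℝ)
      have h4 := (hasDerivAt_pow 4 x).const_mul (3:ℝ)
      exact (((h1.add h2).add h3).add h4).congr_deriv (by push_cast; ring)
    have hDd : HasDerivAt (fun y : ℝ => 420+720*y+360*y^2+48*y^3) (720+720*x+144*x^2) x := by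
      have h1 := ((hasDerivAt_id x).const_mul (720:ℝ)).const_add (420:ℝ)
      have h2 := (hasDerivAt_pow 2 x).const_mul (360:ℝ)
      have h3 := (hasDerivAt_pow 3 x).const_mul (48:ℝ)
      exact ((h1.add h2).add h3).congr_deriv (by push_cast; ring)
    have hq := hN.div hDd (ne_of_gt (hD x hx))
    have := hq.sub hl
    refine this.congr_deriv ?_
    rw [div_sub_div _ _ (pow_pos (hD x hx) 2).ne' (ne_of_gt h1x)]
    rw [div_eq_div_iff (by positivity) (by positivity)]
    ring
  have hmono : MonotoneOn f (Set.Ici (0:ℝ)) := by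
    apply monotoneOn_of_deriv_nonneg (convex_Ici 0)
    · intro x hx
      exact (hder x hx).continuousAt.continuousWithinAt
    · intro x hx
      rw [interior_Ici] at hx
      exact (hder x (le_of_lt (Set.mem_Ioi.mp hx))).differentiableAt.differentiableWithinAt
    · intro x hx
      rw [interior_Ici] at hx
      have hx' : (0:ℝ) < x := hx
      rw [(hder x (le_of_lt hx')).deriv]
      have h1 : (0:ℝ) < 1 + x := by linarith
      have h2 := pow_nonneg (le_of_lt hx') 6
      have h3 := pow_nonneg (le_of_lt hx') 7
      apply div_nonneg (by linarith) (by positivity)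
  have h0 : f 0 = 0 := by simp [hf]
  have := hmono (Set.mem_Ici.mpr le_rfl) (Set.mem_Ici.mpr hz) hz
  rw [h0, hf] at this
  simpa [sub_nonneg] using this


lemma E_lt : Real.exp (-1) < 0.3678795 := by
  have h := Real.exp_one_gt_d9
  have h2 : Real.exp (-1) = (Real.exp 1)⁻¹ := by rw [← Real.exp_neg]
  rw [h2, inv_lt_comm₀ (Real.exp_pos 1) (by norm_num)]
  calc (0.3678795:ℝ)⁻¹ < 2.7182818283 := by norm_num
    _ < Real.exp 1 := h

lemma E_gt : (0.3678794 : ℝ) < Real.exp (-1) := by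
  have h := Real.exp_one_lt_d9
  have h2 : Real.exp (-1) = (Real.exp 1)⁻¹ := by rw [← Real.exp_neg]
  rw [h2, lt_inv_comm₀ (by norm_num) (Real.exp_pos 1)]
  calc Real.exp 1 < 2.7182818286 := h
    _ < (0.3678794:ℝ)⁻¹ := by norm_num

lemma log_one_sub_E : Real.log (1 - Real.exp (-1)) ≤ -0.4586 := by
  have hE1 := E_lt
  have hE2 := E_gt
  have h1 : Real.log (1 - Real.exp (-1)) ≤ Real.log 0.6321206 := by
    apply Real.log_le_log (by linarith)
    linarith
  have h2 : Real.log (0.6321206 : ℝ) = - Real.log (1 + 0.3678794/0.6321206) := by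
    rw [← Real.log_inv]
    norm_num
  have h3 := log_lb (0.3678794/0.6321206) (by norm_num)
  rw [h2] at h1
  have h4 : (0.4586:ℝ) ≤ (60*(0.3678794/0.6321206)+60*(0.3678794/0.6321206)^2+11*(0.3678794/0.6321206)^3)/(60+90*(0.3678794/0.6321206)+36*(0.3678794/0.6321206)^2+3*(0.3678794/0.6321206)^3) := by
    norm_num
  linarith


lemma scalarB (s : ℝ) (h0 : 0 < s) (h1 : s ≤ 1 - Real.exp (-1)) :
    1/2 ≤ 1 - Real.exp (-1) - s + s^2 + (1-s^2)*Real.log (1+s) + s^2*Real.log s := by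
  have hE1 := E_lt
  have hE2 := E_gt
  have hs1 : s ≤ 0.6321206 := by linarith
  have hs0 : (0:ℝ) ≤ s := h0.le
  -- lower bound for log (1+s)
  have hL := log_lb s hs0
  -- lower bound for log s
  have hz : (0:ℝ) ≤ (1-s)/s := div_nonneg (by linarith) hs0
  have hU := log_ub ((1-s)/s) hz
  have hinv : (1:ℝ) + (1-s)/s = s⁻¹ := by field_simp; ring
  rw [hinv, Real.log_inv] at hU
  have hUeq : (420*((1-s)/s)+510*((1-s)/s)^2+140*((1-s)/s)^3+3*((1-s)/s)^4)/(420+720*((1-s)/s)+360*((1-s)/s)^2+48*((1-s)/s)^3)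
      = (1-s)*(3+131*s+239*s^2+47*s^3)/(s*(48+216*s+144*s^2+12*s^3)) := by
    rw [div_eq_div_iff]
    · field_simp
      ring
    · have hp : (0:ℝ) < 420+720*((1-s)/s)+360*((1-s)/s)^2+48*((1-s)/s)^3 := by positivity
      exact ne_of_gt hp
    · positivity
  rw [hUeq] at hU
  -- hU : -Real.log s ≤ (1-s)*(...)/(s*(...))
  have hlogs : -((1-s)*(3+131*s+239*s^2+47*s^3)/(s*(48+216*s+144*s^2+12*s^3))) ≤ Real.log s := by linarith
  have h1s2 : (0:ℝ) ≤ 1 - s^2 := by nlinarith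
  have key : 1/2 ≤ 0.6321205 - s + s^2
      + (1-s^2)*((60*s+60*s^2+11*s^3)/(60+90*s+36*s^2+3*s^3))
      + s^2*(-((1-s)*(3+131*s+239*s^2+47*s^3)/(s*(48+216*s+144*s^2+12*s^3)))) := by
    rw [← sub_nonneg]
    have hQ1 : (0:ℝ) < 60+90*s+36*s^2+3*s^3 := by positivity
    have hQ2 : (0:ℝ) < s*(48+216*s+144*s^2+12*s^3) := by positivity
    have heq : 0.6321205 - s + s^2
        + (1-s^2)*((60*s+60*s^2+11*s^3)/(60+90*s+36*s^2+3*s^3))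
        + s^2*(-((1-s)*(3+131*s+239*s^2+47*s^3)/(s*(48+216*s+144*s^2+12*s^3)))) - 1/2
        = ((2378169/6250)*s + (6572007/3125)*s^2 - (321469017/125000)*s^3 - (21335493/2500)*s^4
           + (34378389/15625)*s^5 + (675384507/62500)*s^6 + (2633378169/500000)*s^7 + 792*s^8 + 45*s^9)
          / ((60+90*s+36*s^2+3*s^3)*(s*(48+216*s+144*s^2+12*s^3))) := by
      field_simp
      ring
    rw [heq]
    apply div_nonneg _ (by positivity)
    have hb : (0:ℝ) ≤ 6321206/10^7 - s := by norm_num; linarith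
    have T0 : (0:ℝ) ≤ (6321206/10^7 - s)^9 := pow_nonneg hb 9
    have T1 : (0:ℝ) ≤ s^1*(6321206/10^7 - s)^8 := mul_nonneg (pow_nonneg hs0 1) (pow_nonneg hb 8)
    have T2 : (0:ℝ) ≤ s^2*(6321206/10^7 - s)^7 := mul_nonneg (pow_nonneg hs0 2) (pow_nonneg hb 7)
    have T3 : (0:ℝ) ≤ s^3*(6321206/10^7 - s)^6 := mul_nonneg (pow_nonneg hs0 3) (pow_nonneg hb 6)
    have T4 : (0:ℝ) ≤ s^4*(6321206/10^7 - s)^5 := mul_nonneg (pow_nonneg hs0 4) (pow_nonneg hb 5)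
    have T5 : (0:ℝ) ≤ s^5*(6321206/10^7 - s)^4 := mul_nonneg (pow_nonneg hs0 5) (pow_nonneg hb 4)
    have T6 : (0:ℝ) ≤ s^6*(6321206/10^7 - s)^3 := mul_nonneg (pow_nonneg hs0 6) (pow_nonneg hb 3)
    have T7 : (0:ℝ) ≤ s^7*(6321206/10^7 - s)^2 := mul_nonneg (pow_nonneg hs0 7) (pow_nonneg hb 2)
    have T8 : (0:ℝ) ≤ s^8*(6321206/10^7 - s)^1 := mul_nonneg (pow_nonneg hs0 8) (pow_nonneg hb 1)
    have T9 : (0:ℝ) ≤ s^9 := pow_nonneg hs0 9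
    linarith [T0, T1, T2, T3, T4, T5, T6, T7, T8, T9]
  have hm1 : (1-s^2)*((60*s+60*s^2+11*s^3)/(60+90*s+36*s^2+3*s^3)) ≤ (1-s^2)*Real.log (1+s) :=
    mul_le_mul_of_nonneg_left hL h1s2
  have hm2 : s^2*(-((1-s)*(3+131*s+239*s^2+47*s^3)/(s*(48+216*s+144*s^2+12*s^3)))) ≤ s^2*Real.log s :=
    mul_le_mul_of_nonneg_left hlogs (by positivity)
  linarith


lemma log_lower (x : ℝ) (h0 : 0 < x) (h1 : x ≤ 1) :
    -((1-x)*(3+131*x+239*x^2+47*x^3)/(x*(48+216*x+144*x^2+12*x^3))) ≤ Real.log x := by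
  have hz : (0:ℝ) ≤ (1-x)/x := div_nonneg (by linarith) h0.le
  have hU := log_ub ((1-x)/x) hz
  have hinv : (1:ℝ) + (1-x)/x = x⁻¹ := by field_simp; ring
  rw [hinv, Real.log_inv] at hU
  have hUeq : (420*((1-x)/x)+510*((1-x)/x)^2+140*((1-x)/x)^3+3*((1-x)/x)^4)/(420+720*((1-x)/x)+360*((1-x)/x)^2+48*((1-x)/x)^3)
      = (1-x)*(3+131*x+239*x^2+47*x^3)/(x*(48+216*x+144*x^2+12*x^3)) := by
    rw [div_eq_div_iff]
    · field_simp
      ring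
    · have hp : (0:ℝ) < 420+720*((1-x)/x)+360*((1-x)/x)^2+48*((1-x)/x)^3 := by positivity
      exact ne_of_gt hp
    · positivity
  rw [hUeq] at hU
  linarith

lemma scalarA (w : ℝ) (hw0 : (1-Real.exp (-1))^2 ≤ w) (hw1 : w ≤ 1 - Real.exp (-1)) :
    -(1/2) ≤ (1-w)*Real.log (1-w) + w*Real.log w - w*Real.log (1-Real.exp (-1)) := by
  have hE1 := E_lt
  have hE2 := E_gt
  have ha : (0.3995:ℝ) ≤ w := by nlinarith
  have hb : w ≤ 0.6321206 := by linarith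
  have hw01 : (0:ℝ) < w := by linarith
  have hw11 : w < 1 := by linarith
  have hu : (0:ℝ) < 1 - w := by linarith
  have hlw := log_lower w hw01 hw11.le
  have hl1w := log_lower (1-w) hu (by linarith)
  have hlE := log_one_sub_E
  -- multiply bounds
  have hm1 : (1-w)*(-((1-(1-w))*(3+131*(1-w)+239*(1-w)^2+47*(1-w)^3)/((1-w)*(48+216*(1-w)+144*(1-w)^2+12*(1-w)^3)))) ≤ (1-w)*Real.log (1-w) :=
    mul_le_mul_of_nonneg_left hl1w hu.le
  have hm2 : w*(-((1-w)*(3+131*w+239*w^2+47*w^3)/(w*(48+216*w+144*w^2+12*w^3)))) ≤ w*Real.log w :=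
    mul_le_mul_of_nonneg_left hlw hw01.le
  have hm3 : -(w*Real.log (1-Real.exp (-1))) ≥ 0.4586*w := by nlinarith
  have key : -(1/2) ≤ (1-w)*(-((1-(1-w))*(3+131*(1-w)+239*(1-w)^2+47*(1-w)^3)/((1-w)*(48+216*(1-w)+144*(1-w)^2+12*(1-w)^3))))
      + w*(-((1-w)*(3+131*w+239*w^2+47*w^3)/(w*(48+216*w+144*w^2+12*w^3)))) + 0.4586*w := by
    rw [← sub_nonneg]
    have hQ1 : (0:ℝ) < 48+216*(1-w)+144*(1-w)^2+12*(1-w)^3 := by nlinarith [pow_pos hu 2, pow_pos hu 3]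
    have hQ2 : (0:ℝ) < 48+216*w+144*w^2+12*w^3 := by positivity
    have heq : (1-w)*(-((1-(1-w))*(3+131*(1-w)+239*(1-w)^2+47*(1-w)^3)/((1-w)*(48+216*(1-w)+144*(1-w)^2+12*(1-w)^3))))
        + w*(-((1-w)*(3+131*w+239*w^2+47*w^3)/(w*(48+216*w+144*w^2+12*w^3)))) + 0.4586*w - (-(1/2))
        = (8820 - (3831828/125)*w - (638568/25)*w^2 + (20029416/125)*w^3 - (53791986/625)*w^4
           - (10718442/625)*w^5 + (5306322/625)*w^6 - (41274/625)*w^7)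
          / ((48+216*(1-w)+144*(1-w)^2+12*(1-w)^3)*(48+216*w+144*w^2+12*w^3)) := by
      field_simp
      ring
    rw [heq]
    apply div_nonneg _ (by positivity)
    have ha' : (0:ℝ) ≤ w - 3995/10^4 := by norm_num; linarith
    have hb' : (0:ℝ) ≤ 6321206/10^7 - w := by norm_num; linarith
    have T0 : (0:ℝ) ≤ (6321206/10^7 - w)^7 := pow_nonneg hb' 7
    have T1 : (0:ℝ) ≤ (w - 3995/10^4)^1*(6321206/10^7 - w)^6 := mul_nonneg (pow_nonneg ha' 1) (pow_nonneg hb' 6)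
    have T2 : (0:ℝ) ≤ (w - 3995/10^4)^2*(6321206/10^7 - w)^5 := mul_nonneg (pow_nonneg ha' 2) (pow_nonneg hb' 5)
    have T3 : (0:ℝ) ≤ (w - 3995/10^4)^3*(6321206/10^7 - w)^4 := mul_nonneg (pow_nonneg ha' 3) (pow_nonneg hb' 4)
    have T4 : (0:ℝ) ≤ (w - 3995/10^4)^4*(6321206/10^7 - w)^3 := mul_nonneg (pow_nonneg ha' 4) (pow_nonneg hb' 3)
    have T5 : (0:ℝ) ≤ (w - 3995/10^4)^5*(6321206/10^7 - w)^2 := mul_nonneg (pow_nonneg ha' 5) (pow_nonneg hb' 2)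
    have T6 : (0:ℝ) ≤ (w - 3995/10^4)^6*(6321206/10^7 - w)^1 := mul_nonneg (pow_nonneg ha' 6) (pow_nonneg hb' 1)
    have T7 : (0:ℝ) ≤ (w - 3995/10^4)^7 := pow_nonneg ha' 7
    linarith [T0, T1, T2, T3, T4, T5, T6, T7]
  linarith


lemma hasDeriv_F (c y : ℝ) (hy : y < 1) :
    HasDerivAt (fun t => t - (1-c)*(t-1) + (1-c)*Real.log (1 - Real.exp (t-1)))
      ((c - Real.exp (y-1))/(1 - Real.exp (y-1))) y := by
  have ht : Real.exp (y-1) < 1 := Real.exp_lt_one_iff.mpr (by linarith)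
  have h1 : HasDerivAt (fun t : ℝ => Real.exp (t-1)) (Real.exp (y-1)) y := by
    simpa using ((hasDerivAt_id y).sub_const 1).exp
  have h2 : HasDerivAt (fun t : ℝ => 1 - Real.exp (t-1)) (-Real.exp (y-1)) y := by
    exact ((hasDerivAt_const y (1:ℝ)).sub h1).congr_deriv (by simp)
  have h3 := (h2.log (by linarith)).const_mul (1-c)
  have h4 : HasDerivAt (fun t : ℝ => t - (1-c)*(t-1)) (1 - (1-c)) y := by
    exact ((hasDerivAt_id y).sub (((hasDerivAt_id y).sub_const 1).const_mul (1-c))).congr_deriv (by ring)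
  have := h4.add h3
  refine this.congr_deriv ?_
  have hne : 1 - Real.exp (y-1) ≠ 0 := by linarith
  field_simp
  ring

theorem stmt_4 :
    ∀ v ∈ Set.Icc (0:ℝ) 1,
      1 - Real.exp (v - 1) +
        (∫ y in (0:ℝ)..v,
          min (Real.exp (y - 1))
            ((Real.exp (v - 1) - Real.exp (y - 1)) / (1 - Real.exp (y - 1)))) ≥ 1 / 2 := by
  intro v hv
  obtain ⟨hv0, hv1⟩ := hv
  rcases eq_or_lt_of_le hv1 with hveq | hvlt
  · -- v = 1
    subst hveq
    have hE := E_lt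
    have hcongr : (∫ y in (0:ℝ)..1,
        min (Real.exp (y - 1)) ((Real.exp (1 - 1) - Real.exp (y - 1)) / (1 - Real.exp (y - 1))))
        = ∫ y in (0:ℝ)..1, Real.exp (y-1) := by
      apply intervalIntegral.integral_congr_ae
      have hone : ∀ᵐ (x:ℝ), x ≠ 1 := by
        rw [MeasureTheory.ae_iff]
        have h1 : ({x : ℝ | ¬ x ≠ 1} : Set ℝ) = {1} := by ext x; simp
        rw [h1]
        exact MeasureTheory.measure_singleton 1
      filter_upwards [hone] with x hx hxm
      rw [Set.uIoc_of_le (by norm_num : (0:ℝ) ≤ 1)] at hxm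
      have hx1 : x < 1 := lt_of_le_of_ne hxm.2 hx
      have ht : Real.exp (x-1) < 1 := Real.exp_lt_one_iff.mpr (by linarith)
      have hne : 1 - Real.exp (x-1) ≠ 0 := by linarith
      rw [show Real.exp (1-1) = 1 by norm_num]
      rw [div_self hne]
      exact min_eq_left ht.le
    rw [hcongr]
    have hft : (∫ y in (0:ℝ)..1, Real.exp (y-1)) = Real.exp (1-1) - Real.exp (0-1) := by
      apply intervalIntegral.integral_eq_sub_of_hasDerivAt (f := fun y => Real.exp (y-1))
      · intro y _
        simpa using ((hasDerivAt_id y).sub_const 1).exp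
      · apply Continuous.intervalIntegrable
        exact Real.continuous_exp.comp (continuous_id.sub continuous_const)
    rw [hft]
    norm_num at *
    linarith
  · -- v < 1
    set c := Real.exp (v-1) with hc
    have hc1 : c < 1 := Real.exp_lt_one_iff.mpr (by linarith)
    have hcE : Real.exp (-1) ≤ c := Real.exp_le_exp.mpr (by linarith)
    have hc0 : (0:ℝ) < c := Real.exp_pos _
    set s := Real.sqrt (1-c) with hs
    have hs2 : s^2 = 1-c := Real.sq_sqrt (by linarith)
    have hs0 : (0:ℝ) < s := Real.sqrt_pos.mpr (by linarith)
    have hs1 : s < 1 := by nlinarith [E_gt]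
    have hvlog : v - 1 = Real.log c := (Real.log_exp (v-1)).symm
    -- continuity of the integrand on [0, v]
    have hexplt : ∀ y ∈ Set.Icc (0:ℝ) v, Real.exp (y-1) < 1 := by
      intro y hy
      exact Real.exp_lt_one_iff.mpr (by rcases hy with ⟨_, h2⟩; linarith)
    have hcont : ContinuousOn (fun y => min (Real.exp (y - 1)) ((c - Real.exp (y - 1)) / (1 - Real.exp (y - 1)))) (Set.Icc (0:ℝ) v) := by
      apply ContinuousOn.inf
      · exact (Real.continuous_exp.comp (continuous_id.sub continuous_const)).continuousOn
      · apply ContinuousOn.div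
        · exact (continuous_const.sub (Real.continuous_exp.comp (continuous_id.sub continuous_const))).continuousOn
        · exact (continuous_const.sub (Real.continuous_exp.comp (continuous_id.sub continuous_const))).continuousOn
        · intro y hy
          have := hexplt y hy
          intro h
          linarith [this, h]
    have hcontb : ContinuousOn (fun y => (c - Real.exp (y - 1)) / (1 - Real.exp (y - 1))) (Set.Icc (0:ℝ) v) := by
      apply ContinuousOn.div
      · exact (continuous_const.sub (Real.continuous_exp.comp (continuous_id.sub continuous_const))).continuousOn
      · exact (continuous_const.sub (Real.continuous_exp.comp (continuous_id.sub continuous_const))).continuousOn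
      · intro y hy
        have := hexplt y hy
        intro h
        linarith [this, h]
    rcases le_or_gt (1-s) (Real.exp (-1)) with hcase | hcase
    · -- min = b on all of [0, v]
      have hminb : Set.EqOn (fun y => min (Real.exp (y - 1)) ((c - Real.exp (y - 1)) / (1 - Real.exp (y - 1))))
          (fun y => (c - Real.exp (y - 1)) / (1 - Real.exp (y - 1))) (Set.uIcc 0 v) := by
        intro y hy
        rw [Set.uIcc_of_le hv0] at hy
        have ht1 : Real.exp (y-1) < 1 := hexplt y hy
        have htE : Real.exp (-1) ≤ Real.exp (y-1) := Real.exp_le_exp.mpr (by linarith [hy.1])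
        simp only
        apply min_eq_right
        rw [div_le_iff₀ (by linarith)]
        nlinarith [hs2, hs0.le, E_gt]
      rw [intervalIntegral.integral_congr hminb]
      have hftc : (∫ y in (0:ℝ)..v, (c - Real.exp (y - 1)) / (1 - Real.exp (y - 1)))
          = (v - (1-c)*(v-1) + (1-c)*Real.log (1 - Real.exp (v-1)))
            - (0 - (1-c)*(0-1) + (1-c)*Real.log (1 - Real.exp (0-1))) := by
        apply intervalIntegral.integral_eq_sub_of_hasDerivAt
          (f := fun t => t - (1-c)*(t-1) + (1-c)*Real.log (1 - Real.exp (t-1)))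
        · intro y hy
          rw [Set.uIcc_of_le hv0] at hy
          exact hasDeriv_F c y (lt_of_le_of_lt hy.2 hvlt)
        · apply ContinuousOn.intervalIntegrable
          rw [Set.uIcc_of_le hv0]
          exact hcontb
      rw [hftc]
      have he0 : Real.exp ((0:ℝ)-1) = Real.exp (-1) := by norm_num
      have hw := scalarA (1-c) (by nlinarith [hs2, hs0.le, E_gt, E_lt]) (by linarith)
      rw [show (1:ℝ)-(1-c) = c by ring] at hw
      rw [← hvlog] at hw
      rw [he0]
      have hcc : Real.exp (v-1) = c := rfl
      rw [hcc]
      linarith [hw]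
    · -- split at y₀
      have h1s : (0:ℝ) < 1-s := by linarith [Real.exp_pos (-1)]
      set y₀ : ℝ := 1 + Real.log (1-s) with hy₀def
      have hey₀ : Real.exp (y₀ - 1) = 1-s := by
        rw [hy₀def, show 1 + Real.log (1-s) - 1 = Real.log (1-s) by ring, Real.exp_log h1s]
      have hy₀0 : 0 ≤ y₀ := by
        have := (Real.le_log_iff_exp_le h1s).mpr hcase.le
        rw [hy₀def]; linarith
      have hcfac : c = (1-s)*(1+s) := by nlinarith [hs2]
      have hlogc : Real.log c = Real.log (1-s) + Real.log (1+s) := by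
        rw [hcfac, Real.log_mul (ne_of_gt h1s) (by positivity)]
      have hy₀v : y₀ ≤ v := by
        have h1 : Real.log (1-s) ≤ Real.log c := Real.log_le_log h1s (by nlinarith [hs2, hs1])
        rw [hy₀def]; linarith [hvlog]
      have hl3 : v - y₀ = Real.log (1+s) := by
        rw [hy₀def]; rw [hlogc] at hvlog; linarith
      have hsub1 : Set.uIcc 0 y₀ ⊆ Set.Icc 0 v := by
        rw [Set.uIcc_of_le hy₀0]; exact Set.Icc_subset_Icc le_rfl hy₀v
      have hsub2 : Set.uIcc y₀ v ⊆ Set.Icc 0 v := by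
        rw [Set.uIcc_of_le hy₀v]; exact Set.Icc_subset_Icc hy₀0 le_rfl
      have hint1 : IntervalIntegrable (fun y => min (Real.exp (y - 1)) ((c - Real.exp (y - 1)) / (1 - Real.exp (y - 1)))) MeasureTheory.volume 0 y₀ :=
        (hcont.mono hsub1).intervalIntegrable
      have hint2 : IntervalIntegrable (fun y => min (Real.exp (y - 1)) ((c - Real.exp (y - 1)) / (1 - Real.exp (y - 1)))) MeasureTheory.volume y₀ v :=
        (hcont.mono hsub2).intervalIntegrable
      rw [← intervalIntegral.integral_add_adjacent_intervals hint1 hint2]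
      -- piece 1 : min = exp (y-1)
      have hmina : Set.EqOn (fun y => min (Real.exp (y - 1)) ((c - Real.exp (y - 1)) / (1 - Real.exp (y - 1))))
          (fun y => Real.exp (y - 1)) (Set.uIcc 0 y₀) := by
        intro y hy
        rw [Set.uIcc_of_le hy₀0] at hy
        have hty : Real.exp (y-1) ≤ 1-s := by
          rw [← hey₀]; exact Real.exp_le_exp.mpr (by linarith [hy.2])
        simp only
        apply min_eq_left
        rw [le_div_iff₀ (by linarith)]
        nlinarith [hs2]
      rw [intervalIntegral.integral_congr hmina]
      have hftc1 : (∫ y in (0:ℝ)..y₀, Real.exp (y - 1)) = Real.exp (y₀-1) - Real.exp ((0:ℝ)-1) := by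
        apply intervalIntegral.integral_eq_sub_of_hasDerivAt (f := fun t => Real.exp (t-1))
        · intro y _
          simpa using ((hasDerivAt_id y).sub_const 1).exp
        · apply Continuous.intervalIntegrable
          exact Real.continuous_exp.comp (continuous_id.sub continuous_const)
      rw [hftc1]
      -- piece 2 : min = b
      have hminb2 : Set.EqOn (fun y => min (Real.exp (y - 1)) ((c - Real.exp (y - 1)) / (1 - Real.exp (y - 1))))
          (fun y => (c - Real.exp (y - 1)) / (1 - Real.exp (y - 1))) (Set.uIcc y₀ v) := by
        intro y hy
        rw [Set.uIcc_of_le hy₀v] at hy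
        have ht1 : Real.exp (y-1) < 1 := hexplt y ⟨le_trans hy₀0 hy.1, hy.2⟩
        have hty : 1-s ≤ Real.exp (y-1) := by
          rw [← hey₀]; exact Real.exp_le_exp.mpr (by linarith [hy.1])
        simp only
        apply min_eq_right
        rw [div_le_iff₀ (by linarith)]
        nlinarith [hs2, hs0.le]
      rw [intervalIntegral.integral_congr hminb2]
      have hftc2 : (∫ y in y₀..v, (c - Real.exp (y - 1)) / (1 - Real.exp (y - 1)))
          = (v - (1-c)*(v-1) + (1-c)*Real.log (1 - Real.exp (v-1)))
            - (y₀ - (1-c)*(y₀-1) + (1-c)*Real.log (1 - Real.exp (y₀-1))) := by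
        apply intervalIntegral.integral_eq_sub_of_hasDerivAt
          (f := fun t => t - (1-c)*(t-1) + (1-c)*Real.log (1 - Real.exp (t-1)))
        · intro y hy
          rw [Set.uIcc_of_le hy₀v] at hy
          exact hasDeriv_F c y (lt_of_le_of_lt hy.2 hvlt)
        · apply ContinuousOn.intervalIntegrable
          exact hcontb.mono hsub2
      rw [hftc2]
      rw [hey₀]
      have hcc : Real.exp (v-1) = c := rfl
      rw [hcc]
      rw [show (1:ℝ)-(1-s) = s by ring]
      have hl1 : Real.log (1-c) = 2*Real.log s := by
        rw [← hs2, show s^2 = s*s by ring, Real.log_mul (ne_of_gt hs0) (ne_of_gt hs0)]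
        ring
      have he0 : Real.exp ((0:ℝ)-1) = Real.exp (-1) := by norm_num
      rw [he0, hl1]
      have hsc := scalarB s hs0 (by linarith)
      have h1c : (1:ℝ) - c = s^2 := hs2.symm
      have hfd : v - (1-c)*(v-1) + (1-c)*(2*Real.log s) - (y₀ - (1-c)*(y₀-1) + (1-c)*Real.log s)
          = (1-s^2)*Real.log (1+s) + s^2*Real.log s := by
        linear_combination (1-s^2)*hl3 + (Real.log s - (v - y₀))*h1c
      rw [hfd]
      linarith [hsc, h1c]
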